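/- Let A = FᵀF be an n×n real symmetric positive semidefinite matrix (F an m×n real matrix), B an n×n real symmetric positive definite matrix, and x ∈ ℝⁿ with Fx ≠ 0. Set u = Fx/‖Fx‖ and let v ∈ ℝᵐ satisfy ‖v‖ ≤ 1 and uᵀv = 0. Then H_x(u, v) = 2B − (1/(xᵀAx)^{1/2})·(Fᵀv)(Fᵀv)ᵀ, and the Loewner chain 2λ₁(B)·I ⪰ 2B ⪰ H_x(u, v) ⪰ H_f(x) holds, where λ₁(B) is the largest eigenvalue of B and H_f(x) = 2B − A/(xᵀAx)^{1/2} + (Ax)(Ax)ᵀ/(xᵀAx)^{3/2} is the Hessian of f at x. -/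

import Mathlib

open Matrix Pointwise

private lemma aux_conj {n m : ℕ} (F : Matrix (Fin m) (Fin n) ℝ) (a b : Fin m → ℝ) :
    Fᵀ * vecMulVec a b * F = vecMulVec (Fᵀ *ᵥ a) (Fᵀ *ᵥ b) := by
  ext i j
  simp only [mul_apply, vecMulVec_apply, mulVec, dotProduct, transpose_apply,
    Finset.sum_mul, Finset.mul_sum]
  exact Finset.sum_congr rfl fun k _ => Finset.sum_congr rfl fun l _ => by ring

private lemma aux_smul_vmv {n : ℕ} (a b : Fin n → ℝ) (t : ℝ) :
    vecMulVec (t • a) (t • b) = (t * t) • vecMulVec a b := by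
  ext i j; simp only [vecMulVec_apply, Pi.smul_apply, Matrix.smul_apply, smul_eq_mul]; ring

private lemma aux_herm {n : ℕ} (a : Fin n → ℝ) : (vecMulVec a a).IsHermitian := by
  ext i j; simp [conjTranspose_apply, vecMulVec_apply, mul_comm]

private lemma aux_herm_smul {n : ℕ} (M : Matrix (Fin n) (Fin n) ℝ) (c : ℝ)
    (h : M.IsHermitian) : (c • M).IsHermitian := by
  rw [Matrix.IsHermitian, conjTranspose_smul, star_trivial, h.eq]

private lemma aux_vmv_mulVec {n : ℕ} (a b y : Fin n → ℝ) :
    vecMulVec a b *ᵥ y = (b ⬝ᵥ y) • a := by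
  ext i
  simp only [vecMulVec_apply, mulVec, dotProduct, Pi.smul_apply, smul_eq_mul, Finset.sum_mul]
  exact Finset.sum_congr rfl fun k _ => by ring

private lemma aux_star {n : ℕ} (y : Fin n → ℝ) : star y = y :=
  funext fun _ => star_trivial _

private lemma aux_psd_smul {n : ℕ} (M : Matrix (Fin n) (Fin n) ℝ) (c : ℝ) (hc : 0 ≤ c)
    (hM : M.PosSemidef) : (c • M).PosSemidef := by
  refine .of_dotProduct_mulVec_nonneg (aux_herm_smul M c hM.1) fun y => ?_
  rw [smul_mulVec, dotProduct_smul]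
  exact smul_nonneg hc (hM.dotProduct_mulVec_nonneg y)

private lemma aux_psd_vmv {n : ℕ} (a : Fin n → ℝ) : (vecMulVec a a).PosSemidef := by
  refine .of_dotProduct_mulVec_nonneg (aux_herm a) fun y => ?_
  rw [aux_vmv_mulVec, dotProduct_smul, aux_star, dotProduct_comm y a, smul_eq_mul]
  exact mul_self_nonneg _

private lemma aux_dp_nonneg {n : ℕ} (a : Fin n → ℝ) : 0 ≤ a ⬝ᵥ a :=
  Finset.sum_nonneg fun i _ => mul_self_nonneg _

private lemma aux_cauchy {n : ℕ} (a b : Fin n → ℝ) : (a ⬝ᵥ b) ^ 2 ≤ (a ⬝ᵥ a) * (b ⬝ᵥ b) := by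
  simpa [dotProduct, sq] using Finset.sum_mul_sq_le_sq_mul_sq Finset.univ a b

private lemma aux_loewner {n : ℕ} (B : Matrix (Fin n) (Fin n) ℝ) (hB : B.IsHermitian)
    (lamB : ℝ) (hlamB : IsGreatest (spectrum ℝ B) lamB) :
    (lamB • (1 : Matrix (Fin n) (Fin n) ℝ) - B).PosSemidef := by
  have hM : (lamB • (1 : Matrix (Fin n) (Fin n) ℝ) - B).IsHermitian :=
    IsHermitian.sub (aux_herm_smul _ _ isHermitian_one) hB
  refine hM.posSemidef_iff_eigenvalues_nonneg.mpr fun i => ?_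
  have h1 : hM.eigenvalues i ∈ spectrum ℝ (lamB • (1 : Matrix (Fin n) (Fin n) ℝ) - B) :=
    hM.eigenvalues_mem_spectrum_real i
  have h3 : spectrum ℝ (lamB • (1 : Matrix (Fin n) (Fin n) ℝ) - B)
      = ({lamB} : Set ℝ) - spectrum ℝ B := by
    rw [spectrum.singleton_sub_eq, Algebra.algebraMap_eq_smul_one]
  rw [h3] at h1
  obtain ⟨a, ha, b, hb, hab⟩ := Set.mem_sub.mp h1
  rw [Set.mem_singleton_iff] at ha
  subst ha
  have := hlamB.2 hb
  rw [← hab, Pi.zero_apply]; linarith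

/-- Merging the `u`-term: with `u = Fx/‖Fx‖` and `v ⊥ u`, `‖v‖ ≤ 1`, the split surrogate
Hessian simplifies to `H_x(u, v) = 2B − (Fᵀv)(Fᵀv)ᵀ/√(xᵀAx)`, and the Loewner chain
`2λ₁(B)I ⪰ 2B ⪰ H_x(u, v) ⪰ H_f(x)` holds. -/
theorem stmt_15 {n m : ℕ} (A B : Matrix (Fin n) (Fin n) ℝ)
    (F : Matrix (Fin m) (Fin n) ℝ)
    (hA : A.PosSemidef) (hAF : A = Fᵀ * F) (hB : B.PosDef)
    (lamB : ℝ) (hlamB : IsGreatest (spectrum ℝ B) lamB)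
    (x : Fin n → ℝ) (hFx : F *ᵥ x ≠ 0)
    (u v : Fin m → ℝ)
    (hu : u = (Real.sqrt ((F *ᵥ x) ⬝ᵥ (F *ᵥ x)))⁻¹ • (F *ᵥ x))
    (hv : v ⬝ᵥ v ≤ 1) (huv : u ⬝ᵥ v = 0) :
    ((2 : ℝ) • B - (Real.sqrt (x ⬝ᵥ A *ᵥ x))⁻¹ • (Fᵀ * (vecMulVec u u + vecMulVec v v) * F)
        + ((Real.sqrt (x ⬝ᵥ A *ᵥ x)) ^ 3)⁻¹ • vecMulVec (A *ᵥ x) (A *ᵥ x)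
      = (2 : ℝ) • B - (Real.sqrt (x ⬝ᵥ A *ᵥ x))⁻¹ • vecMulVec (Fᵀ *ᵥ v) (Fᵀ *ᵥ v)) ∧
    ((2 * lamB) • (1 : Matrix (Fin n) (Fin n) ℝ) - (2 : ℝ) • B).PosSemidef ∧
    ((2 : ℝ) • B -
      ((2 : ℝ) • B - (Real.sqrt (x ⬝ᵥ A *ᵥ x))⁻¹ •
        vecMulVec (Fᵀ *ᵥ v) (Fᵀ *ᵥ v))).PosSemidef ∧
    (((2 : ℝ) • B - (Real.sqrt (x ⬝ᵥ A *ᵥ x))⁻¹ • vecMulVec (Fᵀ *ᵥ v) (Fᵀ *ᵥ v))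
      - ((2 : ℝ) • B - (Real.sqrt (x ⬝ᵥ A *ᵥ x))⁻¹ • A
        + ((Real.sqrt (x ⬝ᵥ A *ᵥ x)) ^ 3)⁻¹ • vecMulVec (A *ᵥ x) (A *ᵥ x))).PosSemidef := by
  set w : Fin m → ℝ := F *ᵥ x with hw
  set c : ℝ := w ⬝ᵥ w with hcdef
  have hc : 0 < c :=
    lt_of_le_of_ne (aux_dp_nonneg w) (fun h => hFx (dotProduct_self_eq_zero.mp h.symm))
  set s : ℝ := Real.sqrt c with hsdef
  have hs : 0 < s := Real.sqrt_pos.mpr hc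
  have hs2 : s * s = c := Real.mul_self_sqrt hc.le
  have hAx : A *ᵥ x = Fᵀ *ᵥ w := by rw [hAF, ← mulVec_mulVec]
  have hdpF : ∀ (a : Fin m → ℝ) (y : Fin n → ℝ), (Fᵀ *ᵥ a) ⬝ᵥ y = a ⬝ᵥ (F *ᵥ y) := by
    intro a y
    rw [dotProduct_mulVec a F y, mulVec_transpose]
  have hxAx : x ⬝ᵥ A *ᵥ x = c := by
    rw [hAx, dotProduct_mulVec x Fᵀ w, ← mulVec_transpose, transpose_transpose]
  have hcoef : s⁻¹ * c⁻¹ = (s ^ 3)⁻¹ := by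
    rw [← mul_inv]; congr 1; rw [← hs2]; ring
  have hwv : w ⬝ᵥ v = 0 := by
    rw [hu, smul_dotProduct, smul_eq_mul] at huv
    rcases mul_eq_zero.mp huv with h | h
    · exact absurd h (inv_ne_zero hs.ne')
    · exact h
  rw [hxAx]
  refine ⟨?_, ?_, ?_, ?_⟩
  · -- Part 1: merging identity
    have e1 : Fᵀ * vecMulVec u u * F = c⁻¹ • vecMulVec (A *ᵥ x) (A *ᵥ x) := by
      rw [aux_conj, hu, mulVec_smul, aux_smul_vmv, ← mul_inv, hs2, ← hAx]
    have e2 : Fᵀ * vecMulVec v v * F = vecMulVec (Fᵀ *ᵥ v) (Fᵀ *ᵥ v) := aux_conj F v v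
    rw [Matrix.mul_add, Matrix.add_mul, e1, e2, smul_add, smul_smul, hcoef]
    abel
  · -- Part 2: 2λI - 2B ⪰ 0
    have h : (2 * lamB) • (1 : Matrix (Fin n) (Fin n) ℝ) - (2 : ℝ) • B
        = (2 : ℝ) • (lamB • (1 : Matrix (Fin n) (Fin n) ℝ) - B) := by
      rw [smul_sub, smul_smul]
    rw [h]
    exact aux_psd_smul _ _ (by norm_num) (aux_loewner B hB.1 lamB hlamB)
  · -- Part 3: 2B ⪰ H_x(u,v)
    rw [sub_sub_cancel]
    exact aux_psd_smul _ _ (inv_nonneg.mpr (Real.sqrt_nonneg _)) (aux_psd_vmv _)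
  · -- Part 4: H_x(u,v) ⪰ H_f(x)
    have hD : ((2 : ℝ) • B - s⁻¹ • vecMulVec (Fᵀ *ᵥ v) (Fᵀ *ᵥ v))
        - ((2 : ℝ) • B - s⁻¹ • A + (s ^ 3)⁻¹ • vecMulVec (A *ᵥ x) (A *ᵥ x))
        = s⁻¹ • (A - vecMulVec (Fᵀ *ᵥ v) (Fᵀ *ᵥ v)
            - c⁻¹ • vecMulVec (A *ᵥ x) (A *ᵥ x)) := by
      rw [smul_sub, smul_sub, smul_smul, hcoef]
      abel
    rw [hD]
    refine aux_psd_smul _ _ (inv_nonneg.mpr hs.le) (.of_dotProduct_mulVec_nonneg ?_ fun y => ?_)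
    · exact (hA.1.sub (aux_herm _)).sub (aux_herm_smul _ _ (aux_herm _))
    · rw [aux_star]
      set z : Fin m → ℝ := F *ᵥ y with hz
      have hq : y ⬝ᵥ ((A - vecMulVec (Fᵀ *ᵥ v) (Fᵀ *ᵥ v)
          - c⁻¹ • vecMulVec (A *ᵥ x) (A *ᵥ x)) *ᵥ y)
          = z ⬝ᵥ z - (v ⬝ᵥ z) ^ 2 - c⁻¹ * (w ⬝ᵥ z) ^ 2 := by
        rw [sub_mulVec, sub_mulVec, dotProduct_sub, dotProduct_sub, smul_mulVec,
          dotProduct_smul, aux_vmv_mulVec, aux_vmv_mulVec, dotProduct_smul, dotProduct_smul,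
          hdpF, hAx, hdpF, smul_eq_mul, smul_eq_mul, smul_eq_mul,
          dotProduct_comm y (Fᵀ *ᵥ v), dotProduct_comm y (Fᵀ *ᵥ w), hdpF, hdpF]
        have hyAy : y ⬝ᵥ A *ᵥ y = z ⬝ᵥ z := by
          rw [hAF, ← mulVec_mulVec, dotProduct_mulVec y Fᵀ, ← mulVec_transpose,
            transpose_transpose]
        rw [hyAy]; ring
      rw [hq]
      -- scalar inequality
      set vz : ℝ := v ⬝ᵥ z with hvzdef
      set wz : ℝ := w ⬝ᵥ z with hwzdef
      have cs2 : wz ^ 2 ≤ c * (z ⬝ᵥ z) := aux_cauchy w z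
      set z' : Fin m → ℝ := z - (wz / c) • w with hz'
      have hvz' : v ⬝ᵥ z' = vz := by
        rw [hz', dotProduct_sub, dotProduct_smul, smul_eq_mul, dotProduct_comm v w, hwv]
        ring
      have hzz' : z' ⬝ᵥ z' = z ⬝ᵥ z - wz ^ 2 / c := by
        simp only [hz', dotProduct_sub, sub_dotProduct, dotProduct_smul, smul_dotProduct,
          smul_eq_mul, dotProduct_comm z w, ← hwzdef, ← hcdef]
        field_simp
        ring
      have cs1 : vz ^ 2 ≤ (v ⬝ᵥ v) * (z ⬝ᵥ z - wz ^ 2 / c) := by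
        calc vz ^ 2 = (v ⬝ᵥ z') ^ 2 := by rw [hvz']
        _ ≤ (v ⬝ᵥ v) * (z' ⬝ᵥ z') := aux_cauchy v z'
        _ = (v ⬝ᵥ v) * (z ⬝ᵥ z - wz ^ 2 / c) := by rw [hzz']
      have hvv0 : 0 ≤ v ⬝ᵥ v := aux_dp_nonneg v
      have h2 : 0 ≤ z ⬝ᵥ z - wz ^ 2 / c := by
        rw [sub_nonneg, div_le_iff₀ hc]
        linarith [cs2]
      have hdiv : wz ^ 2 / c = c⁻¹ * wz ^ 2 := by rw [div_eq_mul_inv, mul_comm]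
      nlinarith [cs1, h2, hvv0, hv, mul_nonneg (sub_nonneg.mpr hv) h2, hdiv]
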